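/- For positive integers m and n with m > 1, the number of integers j with 1 ≤ j ≤ n and gcd(j,m) = 1 differs from (φ(m)/m)·n by strictly less than 2^(ω(m)-1), where ω(m) is the number of distinct prime factors of m and φ is Euler's totient function. -/

import Mathlib

open Finset ArithmeticFunction
open scoped ArithmeticFunction.Moebius

private lemma count_eq_aux (m n : ℕ) (hm : 0 < m) :
    (((Finset.Icc 1 n).filter (fun j => Nat.gcd j m = 1)).card : ℤ)
      = ∑ d ∈ m.divisors, μ d * (n / d : ℕ) := by
  have key : ∀ j ∈ Finset.Icc 1 n,
      (if Nat.gcd j m = 1 then (1 : ℤ) else 0)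
        = ∑ d ∈ m.divisors, if d ∣ j then μ d else 0 := by
    intro j hj
    have h1 : (Nat.gcd j m).divisors = m.divisors.filter (· ∣ j) := by
      ext d
      simp only [Nat.mem_divisors, Finset.mem_filter, Nat.dvd_gcd_iff]
      constructor
      · rintro ⟨⟨hdj, hdm⟩, -⟩; exact ⟨⟨hdm, hm.ne'⟩, hdj⟩
      · rintro ⟨⟨hdm, -⟩, hdj⟩
        refine ⟨⟨hdj, hdm⟩, ?_⟩
        simp [Nat.gcd_eq_zero_iff, hm.ne']
    have h2 : ∑ d ∈ (Nat.gcd j m).divisors, μ d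
        = if Nat.gcd j m = 1 then (1 : ℤ) else 0 := by
      rw [← coe_mul_zeta_apply, moebius_mul_coe_zeta, one_apply]
    rw [← h2, h1, Finset.sum_filter]
  have hcard : (((Finset.Icc 1 n).filter (fun j => Nat.gcd j m = 1)).card : ℤ)
      = ∑ j ∈ Finset.Icc 1 n, if Nat.gcd j m = 1 then (1 : ℤ) else 0 := by
    rw [Finset.card_filter]
    push_cast
    rfl
  rw [hcard, Finset.sum_congr rfl key, Finset.sum_comm]
  refine Finset.sum_congr rfl fun d hd => ?_
  have : ∑ j ∈ Finset.Icc 1 n, (if d ∣ j then μ d else 0)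
      = μ d * (((Finset.Icc 1 n).filter (fun j => d ∣ j)).card : ℤ) := by
    rw [← Finset.sum_filter, Finset.sum_const, nsmul_eq_mul, mul_comm]
  rw [this]
  congr 2
  have : Finset.Icc 1 n = Finset.Ioc 0 n := rfl
  rw [this]
  exact Nat.Ioc_filter_dvd_card_eq_div n d

private lemma totient_eq_aux (m : ℕ) (hm : 0 < m) :
    (Nat.totient m : ℝ) = ∑ p ∈ m.divisorsAntidiagonal, (μ p.1 : ℝ) * p.2 := by
  have := (sum_eq_iff_sum_mul_moebius_eq (R := ℝ)
    (f := fun d => (Nat.totient d : ℝ)) (g := fun d => (d : ℝ))).mp ?_ m hm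
  · exact this.symm
  · intro k hk
    rw [← Nat.cast_sum]
    norm_cast
    exact Nat.sum_totient k

theorem stmt_0 (m n : ℕ) (hm : 1 < m) (hn : 0 < n) :
    |((((Finset.Icc 1 n).filter (fun j => Nat.gcd j m = 1)).card : ℝ)
      - (Nat.totient m : ℝ) / m * n)| < 2 ^ (m.primeFactors.card - 1) := by
  have hm0' : (0:ℕ) < m := lt_trans one_pos hm
  -- main term as a divisor sum
  have hmain : (Nat.totient m : ℝ) / m * n = ∑ d ∈ m.divisors, (μ d : ℝ) * ((n : ℝ) / d) := by
    rw [totient_eq_aux m hm0']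
    rw [Finset.sum_div, Finset.sum_mul]
    rw [Nat.sum_divisorsAntidiagonal (f := fun i j => (μ i : ℝ) * j / m * n)]
    refine Finset.sum_congr rfl fun d hd => ?_
    obtain ⟨hdm, -⟩ := Nat.mem_divisors.mp hd
    have hdpos : 0 < d := Nat.pos_of_mem_divisors hd
    obtain ⟨e, rfl⟩ := hdm
    have he0 : e ≠ 0 := by rintro rfl; simp at hm0'
    have hd0R : (d:ℝ) ≠ 0 := by exact_mod_cast hdpos.ne'
    have he0R : (e:ℝ) ≠ 0 := by exact_mod_cast he0
    rw [Nat.mul_div_cancel_left e hdpos]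
    push_cast
    field_simp
  -- the count as a divisor sum
  have hcount : (((Finset.Icc 1 n).filter (fun j => Nat.gcd j m = 1)).card : ℝ)
      = ∑ d ∈ m.divisors, (μ d : ℝ) * ((n / d : ℕ) : ℝ) := by
    have h2 := congrArg (Int.cast : ℤ → ℝ) (count_eq_aux m n hm0')
    push_cast at h2
    exact h2
  -- error term
  set f : ℕ → ℝ := fun d => (n : ℝ) / d - ((n / d : ℕ) : ℝ) with hf
  have hE : (((Finset.Icc 1 n).filter (fun j => Nat.gcd j m = 1)).card : ℝ)
      - (Nat.totient m : ℝ) / m * n = ∑ d ∈ m.divisors, (μ d : ℝ) * (- f d) := by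
    rw [hcount, hmain, ← Finset.sum_sub_distrib]
    refine Finset.sum_congr rfl fun d hd => ?_
    simp only [hf]
    ring
  -- restrict to squarefree divisors
  set S := m.divisors.filter Squarefree with hS
  have hrestrict : ∑ d ∈ m.divisors, (μ d : ℝ) * (- f d) = ∑ d ∈ S, (μ d : ℝ) * (- f d) := by
    rw [hS]
    refine (Finset.sum_filter_of_ne fun d hd hne => ?_).symm
    by_contra hsq
    rw [← moebius_ne_zero_iff_squarefree] at hsq
    push_neg at hsq
    simp [hsq] at hne
  -- partition S
  set P := S.filter (fun d => μ d = 1) with hP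
  set N := S.filter (fun d => μ d = -1) with hN
  have hmu : ∀ d ∈ S, μ d = 1 ∨ μ d = -1 := by
    intro d hd
    have : Squarefree d := (Finset.mem_filter.mp hd).2
    exact moebius_ne_zero_iff_eq_or.mp (moebius_ne_zero_iff_squarefree.mpr this)
  have hPN : Disjoint P N := by
    rw [Finset.disjoint_left]
    intro d hdP hdN
    have h1 := (Finset.mem_filter.mp hdP).2
    have h2 := (Finset.mem_filter.mp hdN).2
    omega
  have hunion : P ∪ N = S := by
    ext d
    simp only [hP, hN, Finset.mem_union, Finset.mem_filter]
    constructor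
    · rintro (⟨h, _⟩ | ⟨h, _⟩) <;> exact h
    · intro h
      rcases hmu d h with h1 | h1
      · exact Or.inl ⟨h, h1⟩
      · exact Or.inr ⟨h, h1⟩
  -- cardinalities
  have hScard : S.card = 2 ^ m.primeFactors.card := by
    have h := Nat.sum_divisors_filter_squarefree (n := m) hm0'.ne' (f := fun _ => (1 : ℕ))
    simp only [Finset.sum_const, smul_eq_mul, mul_one, Finset.card_powerset,
      Nat.factors_eq] at h
    rw [hS, show m.divisors.filter Squarefree = m.divisors.filter (fun d => Squarefree d)
      from rfl, h]
    simp
  have hsum0 : ∑ d ∈ S, μ d = 0 := by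
    have h1 : ∑ d ∈ m.divisors, μ d = 0 := by
      rw [← coe_mul_zeta_apply, moebius_mul_coe_zeta, one_apply, if_neg hm.ne']
    rw [hS, ← h1]
    refine Finset.sum_filter_of_ne fun d hd hne => ?_
    exact moebius_ne_zero_iff_squarefree.mp hne
  have hPNcard : (P.card : ℤ) - N.card = 0 := by
    rw [← hsum0, ← hunion, Finset.sum_union hPN]
    have e1 : ∑ d ∈ P, μ d = (P.card : ℤ) := by
      rw [Finset.sum_congr rfl (fun d hd => (Finset.mem_filter.mp hd).2)]
      simp [hP]
    have e2 : ∑ d ∈ N, μ d = -(N.card : ℤ) := by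
      rw [Finset.sum_congr rfl (fun d hd => (Finset.mem_filter.mp hd).2)]
      simp [hN]
    rw [e1, e2]; ring
  have hPNsum : P.card + N.card = 2 ^ m.primeFactors.card := by
    rw [← hScard, ← hunion, Finset.card_union_of_disjoint hPN]
  have homega : 1 ≤ m.primeFactors.card := by
    exact Finset.card_pos.mpr (Nat.nonempty_primeFactors.mpr hm)
  have hPcard : P.card = 2 ^ (m.primeFactors.card - 1) := by
    have h2 : 2 ^ m.primeFactors.card = 2 * 2 ^ (m.primeFactors.card - 1) := by
      conv_lhs => rw [show m.primeFactors.card = (m.primeFactors.card - 1) + 1 by omega]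
      ring
    omega
  have hNcard : N.card = 2 ^ (m.primeFactors.card - 1) := by omega
  -- bounds on f
  have hf0 : ∀ d ∈ m.divisors, 0 ≤ f d := by
    intro d hd
    have hd0 : 0 < d := Nat.pos_of_mem_divisors hd
    have : ((n / d : ℕ) : ℝ) ≤ (n : ℝ) / d := Nat.cast_div_le
    simpa [hf] using this
  have hf1 : ∀ d ∈ m.divisors, f d < 1 := by
    intro d hd
    have hd0 : 0 < d := Nat.pos_of_mem_divisors hd
    have hnat : n < (n / d + 1) * d :=
      calc n = d * (n / d) + n % d := (Nat.div_add_mod n d).symm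
        _ < d * (n / d) + d := by have := Nat.mod_lt n hd0; omega
        _ = (n / d + 1) * d := by ring
    have h1 : (n : ℝ) < ((n / d : ℕ) : ℝ) * d + d :=
      calc (n : ℝ) < (((n / d + 1) * d : ℕ) : ℝ) := by exact_mod_cast hnat
        _ = ((n / d : ℕ) : ℝ) * d + d := by push_cast; ring
    have hd0' : (0:ℝ) < d := by exact_mod_cast hd0
    simp only [hf]
    rw [sub_lt_iff_lt_add, div_lt_iff₀ hd0']
    linarith
  have hSsub : S ⊆ m.divisors := Finset.filter_subset _ _
  have hPsub : P ⊆ m.divisors := (Finset.filter_subset _ _).trans hSsub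
  have hNsub : N ⊆ m.divisors := (Finset.filter_subset _ _).trans hSsub
  -- split error sum
  have hEsplit : ∑ d ∈ S, (μ d : ℝ) * (- f d) = ∑ d ∈ N, f d - ∑ d ∈ P, f d := by
    rw [← hunion, Finset.sum_union hPN]
    have e1 : ∑ d ∈ P, (μ d : ℝ) * (- f d) = -∑ d ∈ P, f d := by
      rw [← Finset.sum_neg_distrib]
      refine Finset.sum_congr rfl fun d hd => ?_
      rw [(Finset.mem_filter.mp hd).2]; push_cast; ring
    have e2 : ∑ d ∈ N, (μ d : ℝ) * (- f d) = ∑ d ∈ N, f d := by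
      refine Finset.sum_congr rfl fun d hd => ?_
      rw [(Finset.mem_filter.mp hd).2]; push_cast; ring
    rw [e1, e2]; ring
  have hPne : P.Nonempty := by
    rw [← Finset.card_pos, hPcard]; positivity
  have hNne : N.Nonempty := by
    rw [← Finset.card_pos, hNcard]; positivity
  have hub : ∑ d ∈ N, f d < 2 ^ (m.primeFactors.card - 1) := by
    calc ∑ d ∈ N, f d < ∑ d ∈ N, (1:ℝ) :=
          Finset.sum_lt_sum_of_nonempty hNne fun d hd => hf1 d (hNsub hd)
      _ = N.card := by simp
      _ = 2 ^ (m.primeFactors.card - 1) := by rw [hNcard]; push_cast; ring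
  have hlb : ∑ d ∈ P, f d < 2 ^ (m.primeFactors.card - 1) := by
    calc ∑ d ∈ P, f d < ∑ d ∈ P, (1:ℝ) :=
          Finset.sum_lt_sum_of_nonempty hPne fun d hd => hf1 d (hPsub hd)
      _ = P.card := by simp
      _ = 2 ^ (m.primeFactors.card - 1) := by rw [hPcard]; push_cast; ring
  have hNge : (0:ℝ) ≤ ∑ d ∈ N, f d := Finset.sum_nonneg fun d hd => hf0 d (hNsub hd)
  have hPge : (0:ℝ) ≤ ∑ d ∈ P, f d := Finset.sum_nonneg fun d hd => hf0 d (hPsub hd)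
  rw [hE, hrestrict, hEsplit, abs_lt]
  constructor <;> linarith
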